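/- Let X be a locally compact second countable Hausdorff space, and let μₙ (n ∈ ℕ) and μ be Radon measures on X such that μₙ converges vaguely to μ (i.e., ∫ f dμₙ → ∫ f dμ for every continuous function f with compact support). Then μₙ × μₙ converges vaguely to μ × μ on X × X. -/

import Mathlib

open MeasureTheory Filter Topology Set

theorem vague_convergence_prod {X : Type*} [TopologicalSpace X] [T2Space X]
    [LocallyCompactSpace X] [SecondCountableTopology X]
    [MeasurableSpace X] [BorelSpace X]
    (μ : ℕ → Measure X) (ν : Measure X)
    [∀ n, IsFiniteMeasureOnCompacts (μ n)] [IsFiniteMeasureOnCompacts ν]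
    (hvague : ∀ f : X → ℝ, Continuous f → HasCompactSupport f →
      Tendsto (fun n => ∫ x, f x ∂(μ n)) atTop (𝓝 (∫ x, f x ∂ν))) :
    ∀ f : X × X → ℝ, Continuous f → HasCompactSupport f →
      Tendsto (fun n => ∫ p, f p ∂((μ n).prod (μ n))) atTop
        (𝓝 (∫ p, f p ∂(ν.prod ν))) := by
  intro f hf hfsupp
  -- compact sets
  have hT : IsCompact (tsupport f) := hfsupp
  set K : Set X := (Prod.fst '' tsupport f) ∪ (Prod.snd '' tsupport f) with hKdef
  have hKc : IsCompact K := (hT.image continuous_fst).union (hT.image continuous_snd)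
  have hTK : tsupport f ⊆ K ×ˢ K := fun p hp =>
    ⟨Or.inl ⟨p, hp, rfl⟩, Or.inr ⟨p, hp, rfl⟩⟩
  obtain ⟨φ, hφ1, -, hφc, hφ01⟩ :=
    exists_continuous_one_zero_of_isCompact hKc isClosed_empty (disjoint_empty _)
  set L : Set X := tsupport (φ : X → ℝ) with hLdef
  have hL : IsCompact L := hφc
  have hKL : K ⊆ L := fun x hx =>
    subset_tsupport _ (by simp [Function.mem_support, hφ1 hx])
  -- the weight function ψ
  set ψ : X × X → ℝ := fun p => φ p.1 * φ p.2 with hψdef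
  have hψcont : Continuous ψ := (φ.continuous.comp continuous_fst).mul
    (φ.continuous.comp continuous_snd)
  have hψ0 : ∀ p : X × X, p ∉ L ×ˢ L → ψ p = 0 := by
    intro p hp
    rcases not_and_or.mp hp with h | h
    · simp [hψdef, image_eq_zero_of_notMem_tsupport h]
    · simp [hψdef, image_eq_zero_of_notMem_tsupport h]
  have hψc : HasCompactSupport ψ := HasCompactSupport.intro (hL.prod hL) hψ0
  have hψ01 : ∀ p : X × X, ψ p ∈ Icc (0:ℝ) 1 := by
    intro p
    have h1 := hφ01 p.1
    have h2 := hφ01 p.2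
    constructor
    · exact mul_nonneg h1.1 h2.1
    · calc φ p.1 * φ p.2 ≤ 1 * 1 := by
            apply mul_le_mul h1.2 h2.2 h2.1 zero_le_one
         _ = 1 := by ring
  have hψ1 : ∀ p ∈ K ×ˢ K, ψ p = 1 := by
    intro p hp
    have h1 : φ p.1 = 1 := hφ1 hp.1
    have h2 : φ p.2 = 1 := hφ1 hp.2
    show φ p.1 * φ p.2 = 1
    rw [h1, h2, one_mul]
  -- integrability of ψ • F for continuous F
  have integψ : ∀ (F : X × X → ℝ), Continuous F → ∀ (m : Measure (X × X)),
      IsFiniteMeasureOnCompacts m → Integrable (fun p => ψ p * F p) m := by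
    intro F hF m hm
    have : HasCompactSupport (fun p => ψ p * F p) := by
      apply HasCompactSupport.intro (hL.prod hL)
      intro p hp
      simp [hψ0 p hp]
    exact (hψcont.mul hF).integrable_of_hasCompactSupport this
  -- uniform bound on measures of L
  obtain ⟨C, hC0, hCν, hCn⟩ : ∃ C : ℝ, 0 ≤ C ∧ (ν L).toReal ≤ C ∧
      ∀ n, ((μ n) L).toReal ≤ C := by
    obtain ⟨Φ, hΦ1, -, hΦc, hΦ01⟩ :=
      exists_continuous_one_zero_of_isCompact hL isClosed_empty (disjoint_empty _)
    have hb : ∀ (m : Measure X), IsFiniteMeasureOnCompacts m →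
        (m L).toReal ≤ ∫ x, Φ x ∂m := by
      intro m hm
      have hint : Integrable (⇑Φ) m := Φ.continuous.integrable_of_hasCompactSupport hΦc
      calc (m L).toReal = ∫ _ in L, (1:ℝ) ∂m := by simp [setIntegral_const, measureReal_def]
        _ ≤ ∫ x in L, Φ x ∂m := by
            apply setIntegral_mono_on
            · exact integrableOn_const hL.measure_lt_top.ne
            · exact hint.integrableOn
            · exact hL.measurableSet
            · intro x hx; exact (hΦ1 hx).symm.le
        _ ≤ ∫ x, Φ x ∂m := by
            apply setIntegral_le_integral hint
            exact Filter.Eventually.of_forall (fun x => (hΦ01 x).1)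
    have htend := hvague Φ Φ.continuous hΦc
    obtain ⟨B, hB⟩ := htend.bddAbove_range
    refine ⟨max B (max (∫ x, Φ x ∂ν) 0), le_max_of_le_right (le_max_right _ _), ?_, ?_⟩
    · exact le_trans (hb ν inferInstance)
        (le_max_of_le_right (le_max_left _ _))
    · intro n
      exact le_trans (hb (μ n) inferInstance)
        (le_max_of_le_left (hB ⟨n, rfl⟩))
  -- the generating set of product functions
  classical
  let fstCM : C(X × X, X) := ⟨Prod.fst, continuous_fst⟩
  let sndCM : C(X × X, X) := ⟨Prod.snd, continuous_snd⟩
  let tensor : C(X, ℝ) → C(X, ℝ) → C(X × X, ℝ) := fun g h =>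
    (g.comp fstCM) * (h.comp sndCM)
  have tensor_apply : ∀ g h p, tensor g h p = g p.1 * h p.2 := fun g h p => rfl
  let gen : Set C(X × X, ℝ) := {F | ∃ g h : C(X, ℝ), F = tensor g h}
  let NN : Submodule ℝ C(X × X, ℝ) := Submodule.span ℝ gen
  have hone : (1 : C(X × X, ℝ)) ∈ gen := ⟨1, 1, by ext p; simp [tensor_apply]⟩
  have hmulmem : ∀ F₁ ∈ NN, ∀ F₂ ∈ NN, F₁ * F₂ ∈ NN := by
    intro F₁ h₁ F₂ h₂
    have : NN * NN ≤ NN := by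
      show Submodule.span ℝ gen * Submodule.span ℝ gen ≤ Submodule.span ℝ gen
      rw [Submodule.span_mul_span]
      apply Submodule.span_le.mpr
      rintro _ ⟨a, ha, b, hb, rfl⟩
      obtain ⟨g₁, h₁, rfl⟩ := ha
      obtain ⟨g₂, h₂, rfl⟩ := hb
      refine Submodule.subset_span ⟨g₁ * g₂, h₁ * h₂, ?_⟩
      ext p
      simp [tensor_apply]
      ring
    exact this (Submodule.mul_mem_mul h₁ h₂)
  -- the tendsto property for elements of NN
  have tendNN : ∀ F ∈ NN,
      Tendsto (fun n => ∫ p, ψ p * F p ∂((μ n).prod (μ n))) atTop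
        (𝓝 (∫ p, ψ p * F p ∂(ν.prod ν))) := by
    intro F hF
    induction hF using Submodule.span_induction with
    | mem F hFgen =>
      obtain ⟨g, h, rfl⟩ := hFgen
      have hrw : ∀ (m : Measure X), IsFiniteMeasureOnCompacts m →
          ∫ p, ψ p * (tensor g h) p ∂(m.prod m)
            = (∫ x, (φ x * g x) ∂m) * (∫ x, (φ x * h x) ∂m) := by
        intro m hm
        rw [← integral_prod_mul (μ := m) (ν := m) (f := fun x => φ x * g x)
          (g := fun x => φ x * h x)]
        congr 1
        funext p
        simp [tensor_apply, hψdef]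
        ring
      simp only [fun n => hrw (μ n) inferInstance, hrw ν inferInstance]
      exact (hvague _ (φ.continuous.mul g.continuous) (hφc.mul_right)).mul
        (hvague _ (φ.continuous.mul h.continuous) (hφc.mul_right))
    | zero => simp
    | add F G hFm hGm hFt hGt =>
      have hrw : ∀ (m : Measure X), IsFiniteMeasureOnCompacts m →
          ∫ p, ψ p * (F + G) p ∂(m.prod m)
            = (∫ p, ψ p * F p ∂(m.prod m)) + (∫ p, ψ p * G p ∂(m.prod m)) := by
        intro m hm
        rw [← integral_add (integψ F F.continuous _ inferInstance)
          (integψ G G.continuous _ inferInstance)]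
        congr 1
        funext p
        simp [mul_add]
      simp only [fun n => hrw (μ n) inferInstance, hrw ν inferInstance]
      exact hFt.add hGt
    | smul a F hFm hFt =>
      have hrw : ∀ (m : Measure X), IsFiniteMeasureOnCompacts m →
          ∫ p, ψ p * (a • F) p ∂(m.prod m)
            = a * ∫ p, ψ p * F p ∂(m.prod m) := by
        intro m hm
        rw [← integral_const_mul]
        congr 1
        funext p
        simp
        ring
      simp only [fun n => hrw (μ n) inferInstance, hrw ν inferInstance]
      exact hFt.const_mul a
  -- Stone-Weierstrass on L × L
  have hLcs : CompactSpace ↥L := isCompact_iff_compactSpace.mp hL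
  let e : C(↥L × ↥L, X × X) :=
    ⟨fun p => (p.1.1, p.2.1),
      (continuous_subtype_val.comp continuous_fst).prodMk
        (continuous_subtype_val.comp continuous_snd)⟩
  let ρ : C(X × X, ℝ) →ₐ[ℝ] C(↥L × ↥L, ℝ) := ContinuousMap.compRightAlgHom ℝ ℝ e
  let A : Subalgebra ℝ C(↥L × ↥L, ℝ) := Algebra.adjoin ℝ (ρ '' gen)
  have hAN : ∀ S ∈ A, ∃ F ∈ NN, ρ F = S := by
    intro S hS
    induction hS using Algebra.adjoin_induction with
    | mem S hSgen =>
      obtain ⟨F, hFgen, rfl⟩ := hSgen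
      exact ⟨F, Submodule.subset_span hFgen, rfl⟩
    | algebraMap r =>
      refine ⟨r • 1, Submodule.smul_mem _ _ (Submodule.subset_span hone), ?_⟩
      rw [_root_.map_smul, map_one, Algebra.algebraMap_eq_smul_one]
    | add S₁ S₂ h₁ h₂ ih₁ ih₂ =>
      obtain ⟨F₁, hF₁, rfl⟩ := ih₁
      obtain ⟨F₂, hF₂, rfl⟩ := ih₂
      exact ⟨F₁ + F₂, Submodule.add_mem _ hF₁ hF₂, map_add _ _ _⟩
    | mul S₁ S₂ h₁ h₂ ih₁ ih₂ =>
      obtain ⟨F₁, hF₁, rfl⟩ := ih₁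
      obtain ⟨F₂, hF₂, rfl⟩ := ih₂
      exact ⟨F₁ * F₂, hmulmem _ hF₁ _ hF₂, map_mul _ _ _⟩
  have hsep : A.SeparatesPoints := by
    intro x y hxy
    have : (x.1 : X) ≠ (y.1 : X) ∨ (x.2 : X) ≠ (y.2 : X) := by
      by_contra hc
      push_neg at hc
      exact hxy (Prod.ext (Subtype.coe_injective hc.1) (Subtype.coe_injective hc.2))
    rcases this with hne | hne
    · obtain ⟨g, hg1, hg0, hgc, -⟩ := exists_continuous_one_zero_of_isCompact
        (isCompact_singleton : IsCompact ({(x.1 : X)} : Set X)) isClosed_singleton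
        (Set.disjoint_singleton.mpr hne)
      refine ⟨⇑(ρ (tensor g 1)), ⟨ρ (tensor g 1),
        Algebra.subset_adjoin ⟨tensor g 1, ⟨g, 1, rfl⟩, rfl⟩, rfl⟩, ?_⟩
      have hx : g (x.1 : X) = 1 := hg1 rfl
      have hy : g (y.1 : X) = 0 := hg0 rfl
      simp [ρ, e, tensor_apply, hx, hy, ContinuousMap.comp_apply]
    · obtain ⟨g, hg1, hg0, hgc, -⟩ := exists_continuous_one_zero_of_isCompact
        (isCompact_singleton : IsCompact ({(x.2 : X)} : Set X)) isClosed_singleton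
        (Set.disjoint_singleton.mpr hne)
      refine ⟨⇑(ρ (tensor 1 g)), ⟨ρ (tensor 1 g),
        Algebra.subset_adjoin ⟨tensor 1 g, ⟨1, g, rfl⟩, rfl⟩, rfl⟩, ?_⟩
      have hx : g (x.2 : X) = 1 := hg1 rfl
      have hy : g (y.2 : X) = 0 := hg0 rfl
      simp [ρ, e, tensor_apply, hx, hy, ContinuousMap.comp_apply]
  -- main ε-argument
  rw [Metric.tendsto_atTop]
  intro ε hε
  set δ : ℝ := ε / (3 * (C ^ 2 + 1)) with hδdef
  have hδpos : 0 < δ := by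
    apply div_pos hε
    positivity
  have hδC : δ * C ^ 2 < ε / 3 := by
    have h1 : δ * (3 * (C ^ 2 + 1)) = ε := by
      rw [hδdef]; field_simp
    nlinarith [hδpos]
  -- get the approximation
  obtain ⟨⟨S, hSA⟩, hSnear⟩ :=
    ContinuousMap.exists_mem_subalgebra_near_continuousMap_of_separatesPoints A hsep
      (ρ ⟨f, hf⟩) δ hδpos
  obtain ⟨F, hFNN, hFS⟩ := hAN S hSA
  -- pointwise bound
  have key : ∀ p : X × X, |f p - ψ p * F p| ≤ δ := by
    intro p
    by_cases hp : p ∈ L ×ˢ L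
    · set p' : ↥L × ↥L := (⟨p.1, hp.1⟩, ⟨p.2, hp.2⟩) with hp'def
      have hep : e p' = p := rfl
      have hFp : F p = S p' := by
        rw [← hFS]
        rfl
      have hfF : |f p - F p| ≤ δ := by
        have := ContinuousMap.norm_coe_le_norm ((S : C(↥L × ↥L, ℝ)) - ρ ⟨f, hf⟩) p'
        rw [ContinuousMap.sub_apply] at this
        have hfp : (ρ ⟨f, hf⟩ : C(↥L × ↥L, ℝ)) p' = f p := rfl
        rw [hfp] at this
        rw [hFp, abs_sub_comm]
        calc |S p' - f p| ≤ ‖(S : C(↥L × ↥L, ℝ)) - ρ ⟨f, hf⟩‖ := this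
          _ ≤ δ := le_of_lt hSnear
      have hsplit : f p - ψ p * F p = ψ p * (f p - F p) + (1 - ψ p) * f p := by ring
      have hzero : (1 - ψ p) * f p = 0 := by
        by_cases hfp : f p = 0
        · simp [hfp]
        · have : p ∈ K ×ˢ K := hTK (subset_tsupport f hfp)
          simp [hψ1 p this]
      rw [hsplit, hzero, add_zero, abs_mul]
      calc |ψ p| * |f p - F p| ≤ 1 * δ := by
            apply mul_le_mul _ hfF (abs_nonneg _) zero_le_one
            rw [abs_of_nonneg (hψ01 p).1]
            exact (hψ01 p).2
        _ = δ := one_mul δ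
    · have hfp : f p = 0 := by
        by_contra hc
        exact hp ((hTK (subset_tsupport f hc)).1.elim
          (fun h => ⟨hKL ((hTK (subset_tsupport f hc)).1 : p.1 ∈ K),
            hKL ((hTK (subset_tsupport f hc)).2 : p.2 ∈ K)⟩)
          (fun h => ⟨hKL ((hTK (subset_tsupport f hc)).1 : p.1 ∈ K),
            hKL ((hTK (subset_tsupport f hc)).2 : p.2 ∈ K)⟩))
      rw [hfp, hψ0 p hp]
      simp [le_of_lt hδpos]
  -- vanishing outside L ×ˢ L
  have hvan : ∀ p : X × X, p ∉ L ×ˢ L → f p - ψ p * F p = 0 := by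
    intro p hp
    have hfp : f p = 0 := by
      by_contra hc
      have hpK : p ∈ K ×ˢ K := hTK (subset_tsupport f hc)
      exact hp ⟨hKL hpK.1, hKL hpK.2⟩
    rw [hfp, hψ0 p hp]
    ring
  -- integral estimate
  have est : ∀ (m : Measure X), IsFiniteMeasureOnCompacts m → (m L).toReal ≤ C →
      |∫ p, f p ∂(m.prod m) - ∫ p, ψ p * F p ∂(m.prod m)| ≤ δ * C ^ 2 := by
    intro m hm hmC
    have hfint : Integrable f (m.prod m) := hf.integrable_of_hasCompactSupport hfsupp
    have hψFint : Integrable (fun p => ψ p * F p) (m.prod m) :=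
      integψ F F.continuous _ inferInstance
    rw [← integral_sub hfint hψFint]
    have h1 : |∫ p, (f p - ψ p * F p) ∂(m.prod m)|
        ≤ ∫ p, |f p - ψ p * F p| ∂(m.prod m) := by
      simpa [Real.norm_eq_abs] using
        norm_integral_le_integral_norm (μ := m.prod m) (fun p => f p - ψ p * F p)
    have h2 : ∫ p, |f p - ψ p * F p| ∂(m.prod m)
        = ∫ p in L ×ˢ L, |f p - ψ p * F p| ∂(m.prod m) := by
      rw [setIntegral_eq_integral_of_forall_compl_eq_zero]
      intro p hp
      rw [hvan p hp, abs_zero]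
    have h3 : ∫ p in L ×ˢ L, |f p - ψ p * F p| ∂(m.prod m)
        ≤ ∫ _ in L ×ˢ L, δ ∂(m.prod m) := by
      apply setIntegral_mono_on
      · exact (hfint.sub hψFint).abs.integrableOn
      · exact integrableOn_const (hL.prod hL).measure_lt_top.ne
      · exact (hL.prod hL).measurableSet
      · intro p _; exact key p
    have h4 : ∫ _ in L ×ˢ L, δ ∂(m.prod m) ≤ δ * C ^ 2 := by
      rw [setIntegral_const, measureReal_def, Measure.prod_prod, ENNReal.toReal_mul, smul_eq_mul]
      rw [mul_comm]
      apply mul_le_mul_of_nonneg_left _ (le_of_lt hδpos)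
      calc (m L).toReal * (m L).toReal ≤ C * C := by
            apply mul_le_mul hmC hmC ENNReal.toReal_nonneg hC0
        _ = C ^ 2 := (sq C).symm
    calc |∫ p, (f p - ψ p * F p) ∂(m.prod m)| ≤ _ := h1
      _ = _ := h2
      _ ≤ _ := h3
      _ ≤ δ * C ^ 2 := h4
  -- combine
  have hmid := Metric.tendsto_atTop.mp (tendNN F hFNN) (ε / 3)
    (by positivity)
  obtain ⟨Nt, hNt⟩ := hmid
  refine ⟨Nt, fun n hn => ?_⟩
  have d1 := est (μ n) inferInstance (hCn n)
  have d2 := hNt n hn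
  have d3 := est ν inferInstance hCν
  rw [Real.dist_eq] at d2 ⊢
  calc |∫ p, f p ∂((μ n).prod (μ n)) - ∫ p, f p ∂(ν.prod ν)|
      ≤ |∫ p, f p ∂((μ n).prod (μ n)) - ∫ p, ψ p * F p ∂((μ n).prod (μ n))|
        + |∫ p, ψ p * F p ∂((μ n).prod (μ n)) - ∫ p, ψ p * F p ∂(ν.prod ν)|
        + |∫ p, ψ p * F p ∂(ν.prod ν) - ∫ p, f p ∂(ν.prod ν)| := by
        have habs : ∀ a b c d : ℝ, |a - d| ≤ |a - b| + |b - c| + |c - d| := by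
          intro a b c d
          have hd : a - d = (a - b) + (b - c) + (c - d) := by ring
          rw [hd]
          exact abs_add_three _ _ _
        exact habs _ _ _ _
    _ < ε := by
        have d3' : |∫ p, ψ p * F p ∂(ν.prod ν) - ∫ p, f p ∂(ν.prod ν)| ≤ δ * C ^ 2 := by
          rw [abs_sub_comm]; exact d3
        linarith
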